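/- For the bidiagonal skew-symmetric pair (A, C = e_1ᵀ, x₀ = e_1) with all a_k ≠ 0, the n×n Hankel matrix H with H_{ij} = e_1ᵀ A^{i+j} e_1 is invertible, while every (n+1)×(n+1) Hankel matrix with entries y(i+j) = e_1ᵀ A^{i+j} e_1 is singular. -/
import Mathlib


open Matrix

private lemma dot_sum_mulVec {N : ℕ} {ι : Type*} (s : Finset ι) (u v : Fin N → ℝ)
    (M : ι → Matrix (Fin N) (Fin N) ℝ) :
    u ⬝ᵥ ((∑ j ∈ s, M j) *ᵥ v) = ∑ j ∈ s, u ⬝ᵥ (M j *ᵥ v) := by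
  induction s using Finset.cons_induction with
  | empty => simp
  | cons a s ha ih =>
    simp only [Finset.sum_cons, Matrix.add_mulVec, dotProduct_add, ih]

/-- For the bidiagonal skew-symmetric pair with `C = e₁ᵀ` and `x₀ = e₁`, the `n × n`
Hankel matrix with entries `y (i+j) = e₁ᵀ A^(i+j) e₁` is invertible, while the
`(n+1) × (n+1)` Hankel matrix is singular. -/
theorem hankel_invertible_and_next_singular (n : ℕ) (hn : 0 < n)
    (A : Matrix (Fin n) (Fin n) ℝ) (a : ℕ → ℝ)
    (hsub : ∀ i j : Fin n, (i : ℕ) = (j : ℕ) + 1 → A i j = a (j : ℕ))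
    (hsup : ∀ i j : Fin n, (j : ℕ) = (i : ℕ) + 1 → A i j = -a (i : ℕ))
    (hzero : ∀ i j : Fin n, (i : ℕ) ≠ (j : ℕ) + 1 → (j : ℕ) ≠ (i : ℕ) + 1 → A i j = 0)
    (hnz : ∀ k : ℕ, k + 1 < n → a k ≠ 0)
    (e₁ : Fin n → ℝ) (he₁ : e₁ = fun k : Fin n => if (k : ℕ) = 0 then 1 else 0)
    (y : ℕ → ℝ) (hy : ∀ k, y k = e₁ ⬝ᵥ (A ^ k *ᵥ e₁)) :
    IsUnit (Matrix.of fun (i j : Fin n) => y ((i : ℕ) + (j : ℕ)))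
    ∧ (Matrix.of fun (i j : Fin (n + 1)) => y ((i : ℕ) + (j : ℕ))).det = 0 := by
  -- A is skew-symmetric
  have hAT : Aᵀ = -A := by
    ext i j
    rcases eq_or_ne (i : ℕ) ((j : ℕ) + 1) with h1 | h1
    · rw [transpose_apply, hsup j i h1, neg_apply, hsub i j h1]
    · rcases eq_or_ne (j : ℕ) ((i : ℕ) + 1) with h2 | h2
      · rw [transpose_apply, hsub j i h2, neg_apply, hsup i j h2, neg_neg]
      · rw [transpose_apply, hzero j i h2 h1, neg_apply, hzero i j h1 h2, neg_zero]
  -- Krylov vectors are triangular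
  have key : ∀ j, ∀ hj : j < n, (∀ k : Fin n, j < (k : ℕ) → (A ^ j *ᵥ e₁) k = 0) ∧
      (A ^ j *ᵥ e₁) ⟨j, hj⟩ = ∏ t ∈ Finset.range j, a t := by
    intro j
    induction j with
    | zero =>
      intro hj
      constructor
      · intro k hk
        simp [he₁, Nat.pos_iff_ne_zero.mp hk]
      · simp [he₁]
    | succ j ih =>
      intro hj
      have hj' : j < n := Nat.lt_of_succ_lt hj
      obtain ⟨ih0, ih1⟩ := ih hj'
      have hstep : A ^ (j + 1) *ᵥ e₁ = A *ᵥ (A ^ j *ᵥ e₁) := by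
        rw [Matrix.mulVec_mulVec, ← pow_succ']
      constructor
      · intro k hk
        rw [hstep]
        show ∑ m, A k m * (A ^ j *ᵥ e₁) m = 0
        apply Finset.sum_eq_zero
        intro m _
        rcases lt_or_ge (j : ℕ) (m : ℕ) with hm | hm
        · rw [ih0 m hm, mul_zero]
        · rw [hzero k m (by omega) (by omega), zero_mul]
      · rw [hstep]
        show ∑ m, A ⟨j + 1, hj⟩ m * (A ^ j *ᵥ e₁) m = _
        rw [Finset.sum_eq_single (⟨j, hj'⟩ : Fin n)]
        · rw [hsub ⟨j + 1, hj⟩ ⟨j, hj'⟩ rfl, ih1, Finset.prod_range_succ, mul_comm]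
        · intro m _ hm
          have hmj : (m : ℕ) ≠ j := fun h => hm (Fin.ext h)
          rcases lt_or_ge (j : ℕ) (m : ℕ) with h | h
          · rw [ih0 m h, mul_zero]
          · rw [hzero _ _ (by simp only [Fin.val_mk]; omega)
              (by simp only [Fin.val_mk]; omega), zero_mul]
        · intro h; exact absurd (Finset.mem_univ _) h
  -- Krylov (controllability) matrix
  set K : Matrix (Fin n) (Fin n) ℝ :=
    Matrix.of fun k j : Fin n => (A ^ (j : ℕ) *ᵥ e₁) k with hKdef
  have hKdet : K.det ≠ 0 := by
    have htri : K.det = ∏ i, K i i :=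
      Matrix.det_of_upperTriangular (fun i j hij => (key (j : ℕ) j.isLt).1 i hij)
    rw [htri]
    apply Finset.prod_ne_zero_iff.mpr
    intro i _
    have : K i i = ∏ t ∈ Finset.range (i : ℕ), a t := by
      simpa [hKdef] using (key (i : ℕ) i.isLt).2
    rw [this]
    apply Finset.prod_ne_zero_iff.mpr
    intro t ht
    exact hnz t (by have := Finset.mem_range.mp ht; omega)
  -- Hankel entries as a product
  have hHy : ∀ i j : Fin n, y ((i : ℕ) + (j : ℕ)) = (-1 : ℝ) ^ (i : ℕ) * ((Kᵀ * K) i j) := by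
    intro i j
    rw [hy, pow_add, ← Matrix.mulVec_mulVec, Matrix.dotProduct_mulVec]
    have h2 : e₁ ᵥ* A ^ (i : ℕ) = (-1 : ℝ) ^ (i : ℕ) • (A ^ (i : ℕ) *ᵥ e₁) := by
      rw [← Matrix.mulVec_transpose, Matrix.transpose_pow, hAT]
      have hneg : (-A) = (-1 : ℝ) • A := by simp
      rw [hneg, smul_pow, Matrix.smul_mulVec]
    have h3 : (Kᵀ * K) i j = (A ^ (i : ℕ) *ᵥ e₁) ⬝ᵥ (A ^ (j : ℕ) *ᵥ e₁) := by
      simp [Matrix.mul_apply, dotProduct, hKdef]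
    rw [h2, smul_dotProduct, smul_eq_mul, h3]
  have hH : (Matrix.of fun (i j : Fin n) => y ((i : ℕ) + (j : ℕ))) =
      Matrix.diagonal (fun i : Fin n => (-1 : ℝ) ^ (i : ℕ)) * (Kᵀ * K) := by
    ext i j
    simp only [Matrix.of_apply, Matrix.diagonal_mul]
    exact hHy i j
  constructor
  · rw [Matrix.isUnit_iff_isUnit_det, isUnit_iff_ne_zero, hH, det_mul, det_mul,
      det_transpose, det_diagonal]
    refine mul_ne_zero ?_ (mul_ne_zero hKdet hKdet)
    apply Finset.prod_ne_zero_iff.mpr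
    intro i _
    exact pow_ne_zero _ (by norm_num)
  · -- Cayley–Hamilton
    set p := A.charpoly with hp
    have hdeg : p.natDegree = n := by
      rw [hp, Matrix.charpoly_natDegree_eq_dim, Fintype.card_fin]
    have hsum : ∑ m ∈ Finset.range (n + 1), p.coeff m • A ^ m = 0 := by
      have h := Matrix.aeval_self_charpoly A
      rwa [Polynomial.aeval_eq_sum_range, hdeg] at h
    have hlast : p.coeff n = 1 := by
      have h := (Matrix.charpoly_monic A).coeff_natDegree
      rwa [hdeg] at h
    apply Matrix.exists_mulVec_eq_zero_iff.mp
    refine ⟨fun j : Fin (n + 1) => p.coeff (j : ℕ), ?_, ?_⟩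
    · intro h0
      have := congrFun h0 (Fin.last n)
      simp only [Fin.val_last, Pi.zero_apply] at this
      rw [hlast] at this
      exact one_ne_zero this
    · funext i
      show ∑ j : Fin (n + 1), y ((i : ℕ) + (j : ℕ)) * p.coeff (j : ℕ) = 0
      have hterm : ∀ j : Fin (n + 1), y ((i : ℕ) + (j : ℕ)) * p.coeff (j : ℕ)
          = e₁ ⬝ᵥ ((p.coeff (j : ℕ) • A ^ ((i : ℕ) + (j : ℕ))) *ᵥ e₁) := by
        intro j
        rw [hy, Matrix.smul_mulVec, dotProduct_smul, smul_eq_mul, mul_comm]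
      rw [Finset.sum_congr rfl (fun j _ => hterm j), ← dot_sum_mulVec]
      have hz : ∑ j : Fin (n + 1), p.coeff (j : ℕ) • A ^ ((i : ℕ) + (j : ℕ)) = 0 := by
        have hsplit : ∀ j : Fin (n + 1), p.coeff (j : ℕ) • A ^ ((i : ℕ) + (j : ℕ))
            = A ^ (i : ℕ) * (p.coeff (j : ℕ) • A ^ (j : ℕ)) := by
          intro j
          rw [pow_add, mul_smul_comm]
        rw [Finset.sum_congr rfl (fun j _ => hsplit j), ← Finset.mul_sum,
          Fin.sum_univ_eq_sum_range (fun m => p.coeff m • A ^ m) (n + 1), hsum, mul_zero]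
      rw [hz, Matrix.zero_mulVec, dotProduct_zero]
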